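/- Let n ≥ 1 and let L_ideal, L_star be n×n complex matrices, with L_ideal = V D V⁻¹ for an invertible matrix V and diagonal matrix D, and suppose every eigenvalue λ of L_ideal satisfies |Im(λ)| ≤ π. If ‖L_star − L_ideal‖_F < 2π / κ(V), then every eigenvalue μ of L_star satisfies |Im(μ)| < 3π. In particular, when searching over branches of the matrix logarithm for a Lindbladian near L_ideal, it suffices to consider branch shifts m_j ∈ {−1, 0, 1} of the principal logarithm eigenvalues. -/

import Mathlib

open scoped Matrix

/-- The Frobenius norm of a complex matrix: `‖M‖_F = sqrt (∑ j k, |M j k|²)`. -/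
noncomputable def frobNorm {m n : Type*} [Fintype m] [Fintype n] (M : Matrix m n ℂ) : ℝ :=
  Real.sqrt (∑ j, ∑ k, ‖M j k‖ ^ 2)

section AuxFrob

attribute [local instance] Matrix.frobeniusNormedAddCommGroup Matrix.frobeniusNormedRing

@[local instance]
def matCompleteSpace {n : ℕ} : CompleteSpace (Matrix (Fin n) (Fin n) ℂ) :=
  inferInstanceAs (CompleteSpace (Fin n → Fin n → ℂ))

lemma frobNorm_eq {n : ℕ} (M : Matrix (Fin n) (Fin n) ℂ) : frobNorm M = ‖M‖ := by
  rw [Matrix.frobenius_norm_def, frobNorm, Real.sqrt_eq_rpow]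
  congr 1
  refine Finset.sum_congr rfl fun i _ => Finset.sum_congr rfl fun j _ => ?_
  rw [← Real.rpow_natCast]
  norm_num

lemma frobNorm_nonneg {n : ℕ} (M : Matrix (Fin n) (Fin n) ℂ) : 0 ≤ frobNorm M :=
  Real.sqrt_nonneg _

lemma frobNorm_mul_le {n : ℕ} (A B : Matrix (Fin n) (Fin n) ℂ) :
    frobNorm (A * B) ≤ frobNorm A * frobNorm B := by
  simpa [frobNorm_eq] using Matrix.frobenius_norm_mul A B

lemma frobNorm_diag_mul {n : ℕ} (w : Fin n → ℂ) (c : ℝ) (hc : 0 ≤ c)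
    (hw : ∀ i, ‖w i‖ ≤ c) (M : Matrix (Fin n) (Fin n) ℂ) :
    frobNorm (Matrix.diagonal w * M) ≤ c * frobNorm M := by
  unfold frobNorm
  rw [← Real.sqrt_sq hc, ← Real.sqrt_mul (by positivity)]
  apply Real.sqrt_le_sqrt
  rw [Finset.mul_sum]
  refine Finset.sum_le_sum fun i _ => ?_
  rw [Finset.mul_sum]
  refine Finset.sum_le_sum fun j _ => ?_
  have hle : ‖(Matrix.diagonal w * M) i j‖ ≤ c * ‖M i j‖ := by
    rw [Matrix.diagonal_mul, norm_mul]
    exact mul_le_mul_of_nonneg_right (hw i) (norm_nonneg _)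
  calc ‖(Matrix.diagonal w * M) i j‖ ^ 2 ≤ (c * ‖M i j‖) ^ 2 :=
        pow_le_pow_left₀ (norm_nonneg _) hle 2
    _ = c ^ 2 * ‖M i j‖ ^ 2 := by ring

lemma aux_isUnit {n : ℕ} (Lstar V D : Matrix (Fin n) (Fin n) ℂ) (hV : IsUnit V)
    (hD : D.IsDiag) (μ : ℂ) (hsep : ∀ i, 2 * Real.pi ≤ ‖μ - D i i‖)
    (hnorm : frobNorm (V⁻¹ * (Lstar - V * D * V⁻¹) * V) < 2 * Real.pi) :
    IsUnit (algebraMap ℂ (Matrix (Fin n) (Fin n) ℂ) μ - Lstar) := by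
  have hpi := Real.pi_pos
  have hdet : IsUnit V.det := (Matrix.isUnit_iff_isUnit_det V).mp hV
  have hVV : V * V⁻¹ = 1 := Matrix.mul_nonsing_inv V hdet
  have hVV' : V⁻¹ * V = 1 := Matrix.nonsing_inv_mul V hdet
  set d : Fin n → ℂ := fun i => D i i with hd
  have hne : ∀ i, μ - d i ≠ 0 := by
    intro i h
    have := hsep i
    rw [hd] at h
    rw [h, norm_zero] at this
    linarith
  set w : Fin n → ℂ := fun i => (μ - d i)⁻¹ with hw
  set A : Matrix (Fin n) (Fin n) ℂ := Matrix.diagonal (fun i => μ - d i) with hA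
  set W : Matrix (Fin n) (Fin n) ℂ := Matrix.diagonal w with hW
  set B : Matrix (Fin n) (Fin n) ℂ := V⁻¹ * (Lstar - V * D * V⁻¹) * V with hB
  have hAW : A * W = 1 := by
    rw [hA, hW, Matrix.diagonal_mul_diagonal]
    rw [show (fun i => (μ - d i) * w i) = fun _ => (1:ℂ) from funext fun i => mul_inv_cancel₀ (hne i)]
    exact Matrix.diagonal_one
  have hWA : W * A = 1 := by
    rw [hW, hA, Matrix.diagonal_mul_diagonal]
    rw [show (fun i => w i * (μ - d i)) = fun _ => (1:ℂ) from funext fun i => inv_mul_cancel₀ (hne i)]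
    exact Matrix.diagonal_one
  have hAunit : IsUnit A := ⟨⟨A, W, hAW, hWA⟩, rfl⟩
  have hVinvUnit : IsUnit (V⁻¹) := ⟨⟨V⁻¹, V, hVV', hVV⟩, rfl⟩
  -- norm bound on W * B
  have hWB : frobNorm (W * B) < 1 := by
    have h1 : frobNorm (W * B) ≤ (2 * Real.pi)⁻¹ * frobNorm B := by
      refine frobNorm_diag_mul w _ (by positivity) (fun i => ?_) B
      rw [hw, norm_inv]
      exact inv_anti₀ (by positivity) (hsep i)
    have h2 : (2 * Real.pi)⁻¹ * frobNorm B < (2 * Real.pi)⁻¹ * (2 * Real.pi) :=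
      mul_lt_mul_of_pos_left hnorm (by positivity)
    have h3 : (2 * Real.pi)⁻¹ * (2 * Real.pi) = 1 := inv_mul_cancel₀ (by positivity)
    linarith
  have hUnit1 : IsUnit (1 - W * B) := by
    haveI : @CompleteSpace (Matrix (Fin n) (Fin n) ℂ) (PseudoMetricSpace.toUniformSpace) := matCompleteSpace
    apply isUnit_one_sub_of_norm_lt_one
    rwa [← frobNorm_eq]
  -- key factorization
  have hAeq : A = algebraMap ℂ (Matrix (Fin n) (Fin n) ℂ) μ - D := by
    rw [hA, Matrix.algebraMap_eq_diagonal]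
    rw [show D = Matrix.diagonal d from (hD.diagonal_diag).symm]
    rw [Matrix.diagonal_sub]
    congr 1
  have hVA : V * A * V⁻¹ = algebraMap ℂ (Matrix (Fin n) (Fin n) ℂ) μ - V * D * V⁻¹ := by
    rw [hAeq, Matrix.mul_sub, Matrix.sub_mul, ← Algebra.commutes, mul_assoc, hVV, mul_one]
  have hVB : V * B * V⁻¹ = Lstar - V * D * V⁻¹ := by
    rw [hB, ← mul_assoc, ← mul_assoc, hVV, one_mul, mul_assoc, hVV, mul_one]
  have key : V * (A * (1 - W * B)) * V⁻¹ = algebraMap ℂ (Matrix (Fin n) (Fin n) ℂ) μ - Lstar := by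
    have h1 : A * (1 - W * B) = A - B := by
      rw [mul_sub, mul_one, ← mul_assoc, hAW, one_mul]
    rw [h1, Matrix.mul_sub, Matrix.sub_mul, hVA, hVB]
    abel
  rw [← key]
  exact (hV.mul (hAunit.mul hUnit1)).mul hVinvUnit

end AuxFrob

/-- If `L_ideal = V D V⁻¹` with every eigenvalue `λ` of `L_ideal` satisfying
`|Im λ| ≤ π`, and `‖L_star − L_ideal‖_F < 2π / κ(V)`, then every eigenvalue `μ` of `L_star`
satisfies `|Im μ| < 3π`. -/
theorem stmt18 (n : ℕ) (hn : 1 ≤ n) (Lideal Lstar V D : Matrix (Fin n) (Fin n) ℂ)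
    (hV : IsUnit V) (hD : D.IsDiag) (hdiag : Lideal = V * D * V⁻¹)
    (hpb : ∀ lam ∈ spectrum ℂ Lideal, |lam.im| ≤ Real.pi)
    (hclose : frobNorm (Lstar - Lideal) < 2 * Real.pi / (frobNorm V * frobNorm V⁻¹)) :
    ∀ μ ∈ spectrum ℂ Lstar, |μ.im| < 3 * Real.pi := by
  have hpi := Real.pi_pos
  intro μ hμ
  by_contra hcon
  push_neg at hcon
  have ha : 0 ≤ frobNorm V := frobNorm_nonneg V
  have hb : 0 ≤ frobNorm V⁻¹ := frobNorm_nonneg V⁻¹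
  have hE : 0 ≤ frobNorm (Lstar - Lideal) := frobNorm_nonneg _
  have hab : 0 < frobNorm V * frobNorm V⁻¹ := by
    rcases (mul_nonneg ha hb).lt_or_eq with h | h
    · exact h
    · exfalso
      rw [← h, div_zero] at hclose
      linarith
  have hEab : frobNorm (Lstar - Lideal) * (frobNorm V * frobNorm V⁻¹) < 2 * Real.pi :=
    (lt_div_iff₀ hab).mp hclose
  have hBnorm : frobNorm (V⁻¹ * (Lstar - V * D * V⁻¹) * V) < 2 * Real.pi := by
    rw [← hdiag]
    calc frobNorm (V⁻¹ * (Lstar - Lideal) * V)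
        ≤ frobNorm (V⁻¹ * (Lstar - Lideal)) * frobNorm V := frobNorm_mul_le _ _
      _ ≤ frobNorm V⁻¹ * frobNorm (Lstar - Lideal) * frobNorm V :=
          mul_le_mul_of_nonneg_right (frobNorm_mul_le _ _) ha
      _ = frobNorm (Lstar - Lideal) * (frobNorm V * frobNorm V⁻¹) := by ring
      _ < 2 * Real.pi := hEab
  have hsep : ∀ i, 2 * Real.pi ≤ ‖μ - D i i‖ := by
    intro i
    have hspecD : spectrum ℂ D = Set.range D.diag := by
      conv_lhs => rw [← hD.diagonal_diag]
      rw [spectrum_diagonal]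
    have hmem : D i i ∈ spectrum ℂ Lideal := by
      rw [hdiag, ← hV.unit_spec, ← Matrix.coe_units_inv, spectrum.units_conjugate, hspecD]
      exact ⟨i, rfl⟩
    have h1 : |(D i i).im| ≤ Real.pi := hpb _ hmem
    have h2 : |(μ - D i i).im| ≤ ‖μ - D i i‖ := Complex.abs_im_le_norm _
    rw [Complex.sub_im] at h2
    have h3 : |μ.im| - |(D i i).im| ≤ |μ.im - (D i i).im| := abs_sub_abs_le_abs_sub _ _
    linarith
  exact (spectrum.mem_iff.mp hμ) (aux_isUnit Lstar V D hV hD μ hsep hBnorm)
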